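/- Let M be a positive integer. For E ∈ ℝ, there exists a pair of differentiable 2πM-periodic functions x, y : ℝ → ℝ, not both identically zero, satisfying −(√6/2)·x(τ) − y'(τ) = E·x(τ) and x'(τ) − (√6/2)·y(τ) = E·y(τ) for all τ, if and only if E = −√6/2 + n/M for some integer n. In particular, for E = 0 the only solution is the identically zero pair. -/

import Mathlib

open Real

/-- Solution formula: if x' = k y, y' = -k x, then x, y are rotations of initial data. -/
lemma sol_formula (k : ℝ) (x y : ℝ → ℝ) (hx : Differentiable ℝ x) (hy : Differentiable ℝ y)
    (hdx : ∀ τ, deriv x τ = k * y τ) (hdy : ∀ τ, deriv y τ = -(k * x τ)) :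
    ∀ τ, x τ = x 0 * Real.cos (k * τ) + y 0 * Real.sin (k * τ) ∧
      y τ = -(x 0 * Real.sin (k * τ)) + y 0 * Real.cos (k * τ) := by
  set g : ℝ → ℝ := fun τ => x τ * Real.cos (k * τ) - y τ * Real.sin (k * τ) with hgdef
  set h : ℝ → ℝ := fun τ => x τ * Real.sin (k * τ) + y τ * Real.cos (k * τ) with hhdef
  have hkd : ∀ τ : ℝ, HasDerivAt (fun τ : ℝ => k * τ) k τ := fun τ => by
    simpa using (hasDerivAt_id τ).const_mul k
  have hgd : ∀ τ, HasDerivAt g 0 τ := by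
    intro τ
    have h1 : HasDerivAt x (k * y τ) τ := hdx τ ▸ (hx τ).hasDerivAt
    have h2 : HasDerivAt y (-(k * x τ)) τ := hdy τ ▸ (hy τ).hasDerivAt
    have hc : HasDerivAt (fun τ : ℝ => Real.cos (k * τ)) (-Real.sin (k * τ) * k) τ :=
      (hkd τ).cos
    have hs : HasDerivAt (fun τ : ℝ => Real.sin (k * τ)) (Real.cos (k * τ) * k) τ :=
      (hkd τ).sin
    have : HasDerivAt g _ τ := (h1.mul hc).sub (h2.mul hs)
    convert this using 1
    ring
  have hhd : ∀ τ, HasDerivAt h 0 τ := by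
    intro τ
    have h1 : HasDerivAt x (k * y τ) τ := hdx τ ▸ (hx τ).hasDerivAt
    have h2 : HasDerivAt y (-(k * x τ)) τ := hdy τ ▸ (hy τ).hasDerivAt
    have hc : HasDerivAt (fun τ : ℝ => Real.cos (k * τ)) (-Real.sin (k * τ) * k) τ :=
      (hkd τ).cos
    have hs : HasDerivAt (fun τ : ℝ => Real.sin (k * τ)) (Real.cos (k * τ) * k) τ :=
      (hkd τ).sin
    have : HasDerivAt h _ τ := (h1.mul hs).add (h2.mul hc)
    convert this using 1
    ring
  have hgc : ∀ τ, g τ = g 0 := fun τ =>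
    is_const_of_deriv_eq_zero (fun t => (hgd t).differentiableAt)
      (fun t => (hgd t).deriv) τ 0
  have hhc : ∀ τ, h τ = h 0 := fun τ =>
    is_const_of_deriv_eq_zero (fun t => (hhd t).differentiableAt)
      (fun t => (hhd t).deriv) τ 0
  have hg0 : g 0 = x 0 := by simp [hgdef]
  have hh0 : h 0 = y 0 := by simp [hhdef]
  intro τ
  have hgτ : x τ * Real.cos (k * τ) - y τ * Real.sin (k * τ) = x 0 := by
    rw [← hg0]; exact hgc τ
  have hhτ : x τ * Real.sin (k * τ) + y τ * Real.cos (k * τ) = y 0 := by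
    rw [← hh0]; exact hhc τ
  have hpy := Real.sin_sq_add_cos_sq (k * τ)
  constructor
  · linear_combination Real.cos (k * τ) * hgτ + Real.sin (k * τ) * hhτ - x τ * hpy
  · linear_combination (-Real.sin (k * τ)) * hgτ + Real.cos (k * τ) * hhτ - y τ * hpy

lemma fwd_direction (M : ℕ) (hM : 0 < M) (E : ℝ)
    (h : ∃ x y : ℝ → ℝ, Differentiable ℝ x ∧ Differentiable ℝ y ∧
        Function.Periodic x (2 * Real.pi * (M : ℝ)) ∧
        Function.Periodic y (2 * Real.pi * (M : ℝ)) ∧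
        ¬(∀ τ : ℝ, x τ = 0 ∧ y τ = 0) ∧
        (∀ τ : ℝ, -(Real.sqrt 6 / 2) * x τ - deriv y τ = E * x τ ∧
          deriv x τ - (Real.sqrt 6 / 2) * y τ = E * y τ)) :
    ∃ n : ℤ, E = -(Real.sqrt 6 / 2) + (n : ℝ) / (M : ℝ) := by
  obtain ⟨x, y, hx, hy, hpx, hpy, hne, heq⟩ := h
  set k : ℝ := E + Real.sqrt 6 / 2 with hk
  have hdx : ∀ τ, deriv x τ = k * y τ := fun τ => by have := (heq τ).2; rw [hk]; linarith
  have hdy : ∀ τ, deriv y τ = -(k * x τ) := fun τ => by have := (heq τ).1; rw [hk]; linarith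
  have hsol := sol_formula k x y hx hy hdx hdy
  -- initial data nonzero
  push_neg at hne
  obtain ⟨τ0, hτ0⟩ := hne
  have hamp : x τ0 ^ 2 + y τ0 ^ 2 = x 0 ^ 2 + y 0 ^ 2 := by
    obtain ⟨e1, e2⟩ := hsol τ0
    have hpy2 := Real.sin_sq_add_cos_sq (k * τ0)
    linear_combination (x τ0 + x 0 * Real.cos (k * τ0) + y 0 * Real.sin (k * τ0)) * e1 +
      (y τ0 + (-(x 0 * Real.sin (k * τ0)) + y 0 * Real.cos (k * τ0))) * e2 +
      (x 0 ^ 2 + y 0 ^ 2) * hpy2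
  have hpos : 0 < x 0 ^ 2 + y 0 ^ 2 := by
    rw [← hamp]
    rcases Classical.em (x τ0 = 0) with h0 | h0
    · have := hτ0 h0
      positivity
    · positivity
  -- periodicity forces cos θ = 1
  set T : ℝ := 2 * Real.pi * (M : ℝ) with hT
  have hxT : x T = x 0 := by simpa using hpx 0
  have hyT : y T = y 0 := by simpa using hpy 0
  obtain ⟨e1, e2⟩ := hsol T
  rw [hxT] at e1
  rw [hyT] at e2
  have hzero : (x 0 ^ 2 + y 0 ^ 2) * (Real.cos (k * T) - 1) = 0 := by
    linear_combination (-(x 0)) * e1 + (-(y 0)) * e2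
  have hcos : Real.cos (k * T) = 1 := by
    rcases mul_eq_zero.1 hzero with h' | h'
    · exact absurd h' hpos.ne'
    · linarith
  obtain ⟨n, hn⟩ := (Real.cos_eq_one_iff (k * T)).1 hcos
  refine ⟨n, ?_⟩
  have hMne : (M : ℝ) ≠ 0 := Nat.cast_ne_zero.2 hM.ne'
  have hkval : k = (n : ℝ) / (M : ℝ) := by
    have h2π : (2 * Real.pi) ≠ 0 := by positivity
    have hn' : (n : ℝ) = k * (M : ℝ) := by
      apply mul_right_cancel₀ h2π
      rw [hn, hT]; ring
    field_simp
    linarith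
  rw [hk] at hkval
  linarith

lemma bwd_direction (M : ℕ) (hM : 0 < M) (E : ℝ) (n : ℤ)
    (hE : E = -(Real.sqrt 6 / 2) + (n : ℝ) / (M : ℝ)) :
    ∃ x y : ℝ → ℝ, Differentiable ℝ x ∧ Differentiable ℝ y ∧
        Function.Periodic x (2 * Real.pi * (M : ℝ)) ∧
        Function.Periodic y (2 * Real.pi * (M : ℝ)) ∧
        ¬(∀ τ : ℝ, x τ = 0 ∧ y τ = 0) ∧
        (∀ τ : ℝ, -(Real.sqrt 6 / 2) * x τ - deriv y τ = E * x τ ∧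
          deriv x τ - (Real.sqrt 6 / 2) * y τ = E * y τ) := by
  have hMne : (M : ℝ) ≠ 0 := Nat.cast_ne_zero.2 hM.ne'
  set k : ℝ := (n : ℝ) / (M : ℝ) with hk
  refine ⟨fun τ => Real.cos (k * τ), fun τ => -Real.sin (k * τ), ?_, ?_, ?_, ?_, ?_, ?_⟩
  · exact (Real.differentiable_cos.comp (differentiable_id.const_mul k))
  · exact ((Real.differentiable_sin.comp (differentiable_id.const_mul k))).neg
  · intro t
    have h' : k * (t + 2 * Real.pi * (M : ℝ)) = k * t + (n : ℝ) * (2 * Real.pi) := by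
      rw [hk]; field_simp
    show Real.cos (k * (t + 2 * Real.pi * (M : ℝ))) = Real.cos (k * t)
    rw [h', Real.cos_add_int_mul_two_pi]
  · intro t
    have h' : k * (t + 2 * Real.pi * (M : ℝ)) = k * t + (n : ℝ) * (2 * Real.pi) := by
      rw [hk]; field_simp
    show -Real.sin (k * (t + 2 * Real.pi * (M : ℝ))) = -Real.sin (k * t)
    rw [h', Real.sin_add_int_mul_two_pi]
  · intro hall
    have := (hall 0).1
    simp at this
  · intro τ
    have hkd : HasDerivAt (fun τ : ℝ => k * τ) k τ := by
      simpa using (hasDerivAt_id τ).const_mul k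
    have hdx : deriv (fun τ => Real.cos (k * τ)) τ = -Real.sin (k * τ) * k :=
      (hkd.cos).deriv
    have hdy : deriv (fun τ => -Real.sin (k * τ)) τ = -(Real.cos (k * τ) * k) :=
      (hkd.sin.neg).deriv
    rw [hdx, hdy]
    constructor
    · rw [hE]; ring
    · rw [hE]; ring

theorem spectrum_L0_sqrt6 (M : ℕ) (hM : 0 < M) (E : ℝ) :
    ((∃ x y : ℝ → ℝ, Differentiable ℝ x ∧ Differentiable ℝ y ∧
        Function.Periodic x (2 * Real.pi * (M : ℝ)) ∧
        Function.Periodic y (2 * Real.pi * (M : ℝ)) ∧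
        ¬(∀ τ : ℝ, x τ = 0 ∧ y τ = 0) ∧
        (∀ τ : ℝ, -(Real.sqrt 6 / 2) * x τ - deriv y τ = E * x τ ∧
          deriv x τ - (Real.sqrt 6 / 2) * y τ = E * y τ)) ↔
      (∃ n : ℤ, E = -(Real.sqrt 6 / 2) + (n : ℝ) / (M : ℝ))) ∧
    (∀ x y : ℝ → ℝ, Differentiable ℝ x → Differentiable ℝ y →
      Function.Periodic x (2 * Real.pi * (M : ℝ)) →
      Function.Periodic y (2 * Real.pi * (M : ℝ)) →
      (∀ τ : ℝ, -(Real.sqrt 6 / 2) * x τ - deriv y τ = 0 ∧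
        deriv x τ - (Real.sqrt 6 / 2) * y τ = 0) →
      ∀ τ : ℝ, x τ = 0 ∧ y τ = 0) := by
  constructor
  · exact ⟨fwd_direction M hM E, fun ⟨n, hn⟩ => bwd_direction M hM E n hn⟩
  · intro x y hx hy hpx hpy heq
    by_contra hne
    push_neg at hne
    obtain ⟨τ, hτ⟩ := hne
    have hne' : ¬(∀ τ : ℝ, x τ = 0 ∧ y τ = 0) := fun hall => by
      rcases Classical.em (x τ = 0) with h0 | h0
      · exact hτ h0 (hall τ).2
      · exact h0 (hall τ).1
    have heq' : ∀ τ : ℝ, -(Real.sqrt 6 / 2) * x τ - deriv y τ = (0 : ℝ) * x τ ∧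
        deriv x τ - (Real.sqrt 6 / 2) * y τ = (0 : ℝ) * y τ := by
      intro t
      have := heq t
      simpa using this
    obtain ⟨n, hn⟩ := fwd_direction M hM 0 ⟨x, y, hx, hy, hpx, hpy, hne', heq'⟩
    -- 0 = -√6/2 + n/M  ⇒  √6 rational, contradiction
    have hMne : (M : ℝ) ≠ 0 := Nat.cast_ne_zero.2 hM.ne'
    have hsq : Real.sqrt 6 = ((2 * n / (M : ℚ) : ℚ) : ℝ) := by
      push_cast
      field_simp at hn ⊢
      linarith
    have hirr : Irrational (Real.sqrt 6) := by
      rw [show ((6 : ℝ)) = ((6 : ℕ) : ℝ) by norm_num]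
      rw [irrational_sqrt_natCast_iff]
      intro ⟨r, hr⟩
      have h3 : r < 3 := by nlinarith
      interval_cases r <;> omega
    exact hirr ⟨_, hsq.symm⟩
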